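/- Let K be a category with finite coproducts. If K has all small filtered colimits and coequalizers of reflexive pairs, then K has all small colimits (K is cocomplete). -/

import Mathlib

open CategoryTheory CategoryTheory.Limits

universe v u

lemma hasCoequalizers_of_reflexive (K : Type u) [Category.{v} K] [HasBinaryCoproducts K]
    [HasReflexiveCoequalizers K] : HasCoequalizers K := by
  constructor
  intro F
  have key : ∀ {A B : K} (f g : A ⟶ B), HasColimit (parallelPair f g) := ?_
  · exact @hasColimit_of_iso _ _ _ _ _ _ (key _ _) (diagramIsoParallelPair F)
  intro A B f g
  let F' : A ⨿ B ⟶ B := coprod.desc f (𝟙 B)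
  let G' : A ⨿ B ⟶ B := coprod.desc g (𝟙 B)
  have : IsReflexivePair F' G' := ⟨⟨coprod.inr, coprod.inr_desc _ _, coprod.inr_desc _ _⟩⟩
  let c := coequalizer F' G'
  refine HasColimit.mk ⟨Cofork.ofπ (coequalizer.π F' G')
    (by
      have := coequalizer.condition F' G'
      have h := coprod.inl ≫= this
      rw [coprod.inl_desc_assoc, coprod.inl_desc_assoc] at h
      exact h), ?_⟩
  apply Cofork.IsColimit.mk'
  intro s
  refine ⟨coequalizer.desc (f := F') (g := G') s.π
    (by apply coprod.hom_ext <;> simp [F', G', s.condition]), by simp, ?_⟩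
  intro m hm
  exact coequalizer.hom_ext (f := F') (g := G') (by simpa using hm)

theorem hasColimits_of_finite_coproducts_filtered_colimits_reflexive_coequalizers
    (K : Type u) [Category.{v} K] [HasFiniteCoproducts K]
    [HasFilteredColimitsOfSize.{v, v} K] [HasReflexiveCoequalizers K] :
    HasColimits K := by
  have : HasCoproducts.{v} K := hasCoproducts_of_finite_and_filtered
  have : HasCoequalizers K := hasCoequalizers_of_reflexive K
  exact has_colimits_of_hasCoequalizers_and_coproducts
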